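/- Let ζ > 0 and μ ∈ ℂ with |Im μ| < ζ, and define u_μ(α) := −Σ_{k∈ℤ} e^{−|k|ζ} · cos(2kμ) · e^{2ikα}/cosh(kζ), a series converging absolutely for real α. Then for every α ∈ ℝ: u_μ(α) + ∫_{−π/2}^{π/2} K(α−β)·u_μ(β) dβ = −(1/2)·[φ'(α−μ, ζ) + φ'(α+μ, ζ)]. -/

import Mathlib

/-- `φ'(ν, γ) = sinh(2γ)/(sin(ν+iγ) sin(ν−iγ))`. -/
noncomputable def phiP (ν : ℂ) (γ : ℝ) : ℂ :=
  Complex.sinh (2 * (γ : ℂ)) /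
    (Complex.sin (ν + Complex.I * (γ : ℂ)) * Complex.sin (ν - Complex.I * (γ : ℂ)))

/-- The Fourier-series solution `u_μ(α) = −Σ_{k∈ℤ} e^{−|k|ζ} cos(2kμ) e^{2ikα}/cosh(kζ)`
of the dressing integral equation for a close excitation of rapidity `μ`. -/
noncomputable def uFun (ζ : ℝ) (μ : ℂ) (α : ℝ) : ℂ :=
  -∑' k : ℤ, (Real.exp (-(|(k : ℝ)|) * ζ) : ℂ) * Complex.cos (2 * k * μ) *
      Complex.exp (2 * Complex.I * k * (α : ℂ)) / Complex.cosh (k * (ζ : ℂ))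

open Complex MeasureTheory

lemma field_id (A E : ℂ) (hA : A ≠ 0) (hE : E ≠ 0) (h1 : A - E ≠ 0) (h2 : A*E - 1 ≠ 0) :
    (1 - E/A)⁻¹ + (1/(A*E)) * (1 - 1/(A*E))⁻¹
      = ((A - A⁻¹)/2) / ((1 - E/A) * (1 - 1/(A*E)) * A / 2) := by
  have e1 : (1 - E/A) = (A - E)/A := by field_simp
  have e2 : (1 - 1/(A*E)) = (A*E - 1)/(A*E) := by field_simp
  rw [e1, e2]
  field_simp
  ring

/-- Geometric-series Fourier expansion over ℤ, plus nonvanishing of the denominator. -/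
lemma hasSum_geom (a : ℝ) (ha : 0 < a) (x : ℂ) (hx : |x.im| < a) :
    Complex.cosh a - Complex.cos x ≠ 0 ∧
    HasSum (fun k : ℤ => (Real.exp (-(|(k : ℝ)| * a)) : ℂ) * Complex.exp (Complex.I * k * x))
      (Complex.sinh a / (Complex.cosh a - Complex.cos x)) := by
  set w : ℂ := (Real.exp (-a) : ℂ) * Complex.exp (Complex.I * x) with hw
  set v : ℂ := (Real.exp (-a) : ℂ) * Complex.exp (-(Complex.I * x)) with hv
  have hnw : ‖w‖ < 1 := by
    rw [hw, norm_mul, Complex.norm_real, Real.norm_eq_abs,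
      Complex.norm_exp, abs_of_pos (Real.exp_pos _), ← Real.exp_add]
    have h0 : (Complex.I * x).re = -x.im := by simp
    rw [h0, ← Real.exp_zero]
    apply Real.exp_lt_exp.2
    have := neg_lt_of_abs_lt hx
    linarith
  have hnv : ‖v‖ < 1 := by
    rw [hv, norm_mul, Complex.norm_real, Real.norm_eq_abs,
      Complex.norm_exp, abs_of_pos (Real.exp_pos _), ← Real.exp_add]
    have h0 : (-(Complex.I * x)).re = x.im := by simp
    rw [h0, ← Real.exp_zero]
    apply Real.exp_lt_exp.2
    have := lt_of_abs_lt hx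
    linarith
  have h1 : HasSum (fun n : ℕ => w ^ n) (1 - w)⁻¹ := hasSum_geometric_of_norm_lt_one hnw
  have h2 : HasSum (fun n : ℕ => v * v ^ n) (v * (1 - v)⁻¹) :=
    (hasSum_geometric_of_norm_lt_one hnv).mul_left v
  have hpos : ∀ n : ℕ, ((Real.exp (-(|((n : ℤ) : ℝ)| * a)) : ℂ) *
      Complex.exp (Complex.I * ((n : ℤ) : ℂ) * x)) = w ^ n := by
    intro n
    have e1 : (Real.exp (-(|(((n:ℤ)) : ℝ)| * a))) = Real.exp (-a) ^ n := by
      rw [← Real.exp_nat_mul]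
      congr 1
      push_cast
      rw [_root_.abs_of_nonneg (by positivity : (0:ℝ) ≤ (n:ℝ))]
      ring
    have e2 : Complex.exp (Complex.I * (((n:ℤ)) : ℂ) * x)
        = Complex.exp (Complex.I * x) ^ n := by
      rw [← Complex.exp_nat_mul]
      congr 1
      push_cast
      ring
    rw [e1, e2, hw, mul_pow]
    push_cast
    ring
  have hneg : ∀ n : ℕ, ((Real.exp (-(|((-(n+1) : ℤ) : ℝ)| * a)) : ℂ) *
      Complex.exp (Complex.I * ((-(n+1) : ℤ) : ℂ) * x)) = v * v ^ n := by
    intro n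
    have e1 : (Real.exp (-(|((-(n+1) : ℤ) : ℝ)| * a))) = Real.exp (-a) ^ (n+1) := by
      rw [← Real.exp_nat_mul]
      congr 1
      push_cast
      rw [show |(-((n:ℝ)+1))| = (n:ℝ)+1 by rw [abs_neg, _root_.abs_of_nonneg]; positivity]
      ring
    have e2 : Complex.exp (Complex.I * ((-(n+1) : ℤ) : ℂ) * x)
        = Complex.exp (-(Complex.I * x)) ^ (n+1) := by
      rw [← Complex.exp_nat_mul]
      congr 1
      push_cast
      ring
    rw [e1, e2, hv, ← pow_succ' (((Real.exp (-a) : ℂ)) * Complex.exp (-(Complex.I * x))) n,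
      mul_pow]
    push_cast
    ring
  have hsum : HasSum (fun k : ℤ => (Real.exp (-(|(k : ℝ)| * a)) : ℂ) *
      Complex.exp (Complex.I * k * x)) ((1 - w)⁻¹ + v * (1 - v)⁻¹) := by
    apply HasSum.of_nat_of_neg_add_one
    · exact h1.congr_fun fun n => (hpos n)
    · exact h2.congr_fun fun n => by exact_mod_cast (hneg n)
  have hA : Complex.exp (a : ℂ) ≠ 0 := Complex.exp_ne_zero _
  have hE : Complex.exp (Complex.I * x) ≠ 0 := Complex.exp_ne_zero _
  have h1w : (1 : ℂ) - w ≠ 0 := by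
    intro h
    rw [sub_eq_zero] at h
    rw [← h] at hnw
    simp at hnw
  have h1v : (1 : ℂ) - v ≠ 0 := by
    intro h
    rw [sub_eq_zero] at h
    rw [← h] at hnv
    simp at hnv
  have hwA : w = Complex.exp (Complex.I * x) / Complex.exp (a : ℂ) := by
    rw [hw, Complex.ofReal_exp, Complex.ofReal_neg, Complex.exp_neg]
    ring
  have hvA : v = 1 / (Complex.exp (a : ℂ) * Complex.exp (Complex.I * x)) := by
    rw [hv, Complex.ofReal_exp, Complex.ofReal_neg, Complex.exp_neg, Complex.exp_neg]
    ring
  have e1 : Complex.exp (x * Complex.I) = Complex.exp (Complex.I * x) := by rw [mul_comm]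
  have e2 : Complex.exp (-x * Complex.I) = (Complex.exp (Complex.I * x))⁻¹ := by
    rw [← Complex.exp_neg]; congr 1; ring
  have hkey : Complex.cosh a - Complex.cos x
      = (1 - w) * (1 - v) * Complex.exp (a : ℂ) / 2 := by
    rw [Complex.cosh, Complex.cos, Complex.exp_neg, e1, e2, hwA, hvA]
    field_simp
    ring
  have hDne : Complex.cosh a - Complex.cos x ≠ 0 := by
    rw [hkey]
    apply div_ne_zero _ two_ne_zero
    exact mul_ne_zero (mul_ne_zero h1w h1v) hA
  refine ⟨hDne, ?_⟩
  rw [hwA] at h1w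
  rw [hvA] at h1v
  have hAmE : Complex.exp (a : ℂ) - Complex.exp (Complex.I * x) ≠ 0 := by
    intro h
    rw [sub_eq_zero] at h
    exact h1w (by rw [← h, div_self hA, sub_self])
  have hAE1 : Complex.exp (a : ℂ) * Complex.exp (Complex.I * x) - 1 ≠ 0 := by
    intro h
    rw [sub_eq_zero] at h
    exact h1v (by rw [h]; norm_num)
  have hval : (1 - w)⁻¹ + v * (1 - v)⁻¹
      = Complex.sinh a / (Complex.cosh a - Complex.cos x) := by
    rw [hkey, Complex.sinh, Complex.exp_neg, hwA, hvA]
    exact field_id _ _ hA hE hAmE hAE1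
  rw [← hval]
  exact hsum

lemma sin_mul_sin (ν c : ℂ) :
    Complex.sin (ν + Complex.I * c) * Complex.sin (ν - Complex.I * c)
      = (Complex.cosh (2 * c) - Complex.cos (2 * ν)) / 2 := by
  have h : Complex.sin (ν + Complex.I * c) * Complex.sin (ν - Complex.I * c)
      = (Complex.cos ((ν + Complex.I * c) - (ν - Complex.I * c))
        - Complex.cos ((ν + Complex.I * c) + (ν - Complex.I * c))) / 2 := by
    have hc1 := Complex.cos_sub (ν + Complex.I * c) (ν - Complex.I * c)
    have hc2 := Complex.cos_add (ν + Complex.I * c) (ν - Complex.I * c)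
    linear_combination (hc2 - hc1) / 2
  rw [h, show (ν + Complex.I * c) - (ν - Complex.I * c) = (2 * c) * Complex.I by ring,
    show (ν + Complex.I * c) + (ν - Complex.I * c) = 2 * ν by ring, Complex.cos_mul_I]

lemma im_lt (ζ : ℝ) (hζ : 0 < ζ) (ν : ℂ) (hν : |ν.im| < ζ) : |(2 * ν).im| < 2 * ζ := by
  have : (2 * ν).im = 2 * ν.im := by simp
  rw [this, abs_mul, show |(2:ℝ)| = 2 by norm_num]
  linarith

lemma cast2 (ζ : ℝ) : ((2 * ζ : ℝ) : ℂ) = 2 * (ζ : ℂ) := by push_cast; ring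

lemma phiP_hasSum (ζ : ℝ) (hζ : 0 < ζ) (ν : ℂ) (hν : |ν.im| < ζ) :
    HasSum (fun k : ℤ => 2 * ((Real.exp (-(|(k : ℝ)| * (2 * ζ))) : ℂ) *
        Complex.exp (Complex.I * k * (2 * ν)))) (phiP ν ζ) := by
  obtain ⟨hne, hs⟩ := hasSum_geom (2 * ζ) (by linarith) (2 * ν) (im_lt ζ hζ ν hν)
  have hphi : phiP ν ζ = 2 * (Complex.sinh ((2 * ζ : ℝ) : ℂ) /
      (Complex.cosh ((2 * ζ : ℝ) : ℂ) - Complex.cos (2 * ν))) := by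
    rw [phiP, sin_mul_sin, cast2]
    rw [div_div_eq_mul_div]
    ring
  rw [hphi]
  exact hs.mul_left 2

lemma sinsin_ne (ζ : ℝ) (hζ : 0 < ζ) (ν : ℂ) (hν : |ν.im| < ζ) :
    Complex.sin (ν + Complex.I * ζ) * Complex.sin (ν - Complex.I * ζ) ≠ 0 := by
  rw [sin_mul_sin]
  apply div_ne_zero _ two_ne_zero
  have := (hasSum_geom (2 * ζ) (by linarith) (2 * ν) (im_lt ζ hζ ν hν)).1
  rwa [cast2] at this

lemma phiP_continuous (ζ : ℝ) (hζ : 0 < ζ) (α : ℝ) :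
    Continuous fun β : ℝ => phiP ((α : ℂ) - (β : ℂ)) ζ := by
  unfold phiP
  apply Continuous.div continuous_const
  · fun_prop
  · intro β
    apply sinsin_ne ζ hζ
    simp [hζ]

lemma integral_exp_orth (k j : ℤ) :
    (∫ β in (-(Real.pi/2))..(Real.pi/2), Complex.exp ((2*Complex.I*((k : ℂ) - j)) * (β:ℂ)))
      = if j = k then (Real.pi : ℂ) else 0 := by
  by_cases h : j = k
  · subst h
    simp only [sub_self, mul_zero, zero_mul, Complex.exp_zero, if_true]
    rw [intervalIntegral.integral_const]
    push_cast
    simp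
  · rw [if_neg h]
    have hkj : (k : ℂ) - j ≠ 0 := by
      rw [sub_ne_zero]
      exact_mod_cast fun hh => h (by exact_mod_cast hh.symm)
    have hc : (2*Complex.I*((k : ℂ) - j)) ≠ 0 := by
      apply mul_ne_zero (mul_ne_zero two_ne_zero Complex.I_ne_zero) hkj
    rw [integral_exp_mul_complex hc]
    have harg : (2*Complex.I*((k : ℂ) - j)) * ((Real.pi/2 : ℝ) : ℂ)
        = (2*Complex.I*((k : ℂ) - j)) * ((-(Real.pi/2) : ℝ) : ℂ)
          + ((k : ℤ) - j : ℤ) * (2 * (Real.pi : ℝ) * Complex.I) := by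
      push_cast
      ring
    rw [harg, Complex.exp_add, Complex.exp_int_mul_two_pi_mul_I, mul_one, sub_self,
      zero_div]

lemma interval_integral_tsum {F : ℤ → ℝ → ℂ} {a b : ℝ} (hab : a ≤ b)
    (hc : ∀ k, Continuous (F k)) (B : ℤ → ℝ)
    (hB : ∀ k x, ‖F k x‖ ≤ B k) (hBs : Summable B) :
    ∫ x in a..b, (∑' k, F k x) = ∑' k, ∫ x in a..b, F k x := by
  have hres : ∀ k : ℤ, ∫ x in a..b, F k x = ∫ x in Set.Ioc a b, F k x := fun k =>
    intervalIntegral.integral_of_le hab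
  rw [intervalIntegral.integral_of_le hab]
  rw [tsum_congr hres]
  have hint : ∀ k : ℤ, Integrable (F k) (volume.restrict (Set.Ioc a b)) := fun k =>
    (hc k).integrableOn_Ioc
  refine (MeasureTheory.integral_tsum_of_summable_integral_norm hint ?_).symm
  apply Summable.of_nonneg_of_le (fun k => integral_nonneg fun x => norm_nonneg _)
    (fun k => ?_) (hBs.mul_right (b - a))
  have hle : ∫ x in Set.Ioc a b, ‖F k x‖ ≤ ∫ _x in Set.Ioc a b, B k := by
    apply integral_mono_of_nonneg
    · exact Filter.Eventually.of_forall fun x => norm_nonneg _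
    · exact integrable_const _
    · exact Filter.Eventually.of_forall fun x => hB k x
  rw [setIntegral_const, Real.volume_real_Ioc_of_le hab, smul_eq_mul,
    mul_comm] at hle
  exact hle

lemma summable_exp_int (c : ℝ) (hc : 0 < c) :
    Summable (fun j : ℤ => Real.exp (-(|(j : ℝ)| * c))) := by
  have hgeo : Summable (fun n : ℕ => Real.exp (-c) ^ n) :=
    summable_geometric_of_lt_one (le_of_lt (Real.exp_pos _))
      (Real.exp_lt_one_iff.2 (by linarith))
  apply Summable.of_nat_of_neg_add_one
  · apply hgeo.congr
    intro n
    rw [← Real.exp_nat_mul]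
    congr 1
    push_cast
    rw [_root_.abs_of_nonneg (by positivity : (0:ℝ) ≤ (n:ℝ))]
    ring
  · apply ((hgeo.mul_left (Real.exp (-c))).congr)
    intro n
    rw [← pow_succ' (Real.exp (-c)) n, ← Real.exp_nat_mul]
    congr 1
    push_cast
    rw [show |(-((n:ℝ)+1))| = (n:ℝ)+1 by rw [abs_neg, _root_.abs_of_nonneg]; positivity]
    ring

lemma K_coeff (ζ : ℝ) (hζ : 0 < ζ) (α : ℝ) (k : ℤ) :
    (∫ β in (-(Real.pi/2))..(Real.pi/2),
        phiP ((α:ℂ) - (β:ℂ)) ζ * Complex.exp (2*Complex.I*(k:ℂ)*(β:ℂ)))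
      = 2 * (Real.pi : ℂ) * (Real.exp (-(|(k:ℝ)| * (2*ζ))) : ℂ)
        * Complex.exp (2*Complex.I*(k:ℂ)*(α:ℂ)) := by
  set F : ℤ → ℝ → ℂ := fun j β =>
    2 * ((Real.exp (-(|(j:ℝ)| * (2*ζ))) : ℂ) *
      Complex.exp (Complex.I*(j:ℂ)*(2*((α:ℂ)-(β:ℂ))))) * Complex.exp (2*Complex.I*(k:ℂ)*(β:ℂ))
    with hF
  have h1 : ∀ β : ℝ, phiP ((α:ℂ) - (β:ℂ)) ζ * Complex.exp (2*Complex.I*(k:ℂ)*(β:ℂ))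
      = ∑' j, F j β := by
    intro β
    have him : |(((α:ℂ) - (β:ℂ)).im)| < ζ := by simp [hζ]
    exact ((phiP_hasSum ζ hζ _ him).mul_right _).tsum_eq.symm
  have h2 : ∀ (j : ℤ) (β : ℝ), F j β
      = (2 * (Real.exp (-(|(j:ℝ)| * (2*ζ))) : ℂ) * Complex.exp (2*Complex.I*(j:ℂ)*(α:ℂ)))
        * Complex.exp ((2*Complex.I*((k:ℂ) - (j:ℂ))) * (β:ℂ)) := by
    intro j β
    rw [hF]
    simp only [mul_assoc, ← Complex.exp_add]
    congr 3
    ring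
  have hnorm : ∀ (j : ℤ) (β : ℝ), ‖F j β‖ = 2 * Real.exp (-(|(j:ℝ)| * (2*ζ))) := by
    intro j β
    rw [hF]
    simp only [norm_mul, Complex.norm_exp, Complex.norm_real, Real.norm_eq_abs,
      show ‖(2:ℂ)‖ = 2 by norm_num]
    rw [abs_of_pos (Real.exp_pos _)]
    have r1 : (Complex.I*(j:ℂ)*(2*((α:ℂ)-(β:ℂ)))).re = 0 := by simp
    have r2 : (2*Complex.I*(k:ℂ)*(β:ℂ)).re = 0 := by simp
    rw [r1, r2, Real.exp_zero, mul_one, mul_one]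
  have hswap : (∫ β in (-(Real.pi/2))..(Real.pi/2),
      phiP ((α:ℂ) - (β:ℂ)) ζ * Complex.exp (2*Complex.I*(k:ℂ)*(β:ℂ)))
      = ∑' j, ∫ β in (-(Real.pi/2))..(Real.pi/2), F j β := by
    rw [show (fun β : ℝ => phiP ((α:ℂ) - (β:ℂ)) ζ * Complex.exp (2*Complex.I*(k:ℂ)*(β:ℂ)))
        = fun β => ∑' j, F j β from funext h1]
    apply interval_integral_tsum (by linarith [Real.pi_pos])
      (fun j => by fun_prop)
      (fun j => 2 * Real.exp (-(|(j:ℝ)| * (2*ζ))))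
      (fun j x => le_of_eq (hnorm j x))
      ((summable_exp_int (2*ζ) (by linarith)).mul_left 2)
  have h3 : ∀ j : ℤ, (∫ β in (-(Real.pi/2))..(Real.pi/2), F j β)
      = (2 * (Real.exp (-(|(j:ℝ)| * (2*ζ))) : ℂ) * Complex.exp (2*Complex.I*(j:ℂ)*(α:ℂ)))
        * (if j = k then (Real.pi : ℂ) else 0) := by
    intro j
    simp_rw [h2 j]
    rw [intervalIntegral.integral_const_mul, integral_exp_orth]
  rw [hswap, tsum_congr h3, tsum_eq_single k (fun j hj => by rw [if_neg hj, mul_zero]),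
    if_pos rfl]
  ring

noncomputable def cf (ζ : ℝ) (μ : ℂ) (k : ℤ) : ℂ :=
  -((Real.exp (-(|(k : ℝ)|) * ζ) : ℂ) * Complex.cos (2 * k * μ) /
    Complex.cosh ((k : ℂ) * (ζ : ℂ)))

lemma uFun_eq (ζ : ℝ) (μ : ℂ) (α : ℝ) :
    uFun ζ μ α = ∑' k : ℤ, cf ζ μ k * Complex.exp (2 * Complex.I * (k : ℂ) * (α : ℂ)) := by
  rw [uFun, ← tsum_neg]
  apply tsum_congr
  intro k
  rw [cf]
  ring

lemma abs_cos_le (z : ℂ) : ‖Complex.cos z‖ ≤ Real.exp |z.im| := by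
  rw [Complex.cos]
  calc ‖(Complex.exp (z * Complex.I) + Complex.exp (-z * Complex.I)) / 2‖
      ≤ (‖Complex.exp (z * Complex.I)‖ + ‖Complex.exp (-z * Complex.I)‖) / 2 := by
        rw [norm_div, show ‖(2:ℂ)‖ = 2 by norm_num]
        gcongr
        exact norm_add_le _ _
    _ ≤ (Real.exp |z.im| + Real.exp |z.im|) / 2 := by
        gcongr
        · rw [Complex.norm_exp]
          apply Real.exp_le_exp.2
          simp only [Complex.mul_re, Complex.I_re, Complex.I_im, mul_zero, mul_one, zero_sub]
          calc -z.im ≤ |z.im| := neg_le_abs _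
            _ = |z.im| := rfl
        · rw [Complex.norm_exp]
          apply Real.exp_le_exp.2
          simp only [Complex.neg_re, Complex.neg_im, Complex.mul_re, Complex.I_re, Complex.I_im,
            mul_zero, mul_one, zero_sub, neg_neg]
          exact le_abs_self _
    _ = Real.exp |z.im| := by ring

lemma cosh_lower (x : ℝ) : Real.exp |x| / 2 ≤ Real.cosh x := by
  rw [Real.cosh_eq]
  rcases abs_cases x with ⟨h, _⟩ | ⟨h, _⟩
  · rw [h]
    have := Real.exp_pos (-x)
    linarith
  · rw [h]
    have := Real.exp_pos x
    linarith

lemma cf_bound (ζ : ℝ) (hζ : 0 < ζ) (μ : ℂ) (hμ : |μ.im| < ζ) (k : ℤ) :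
    ‖cf ζ μ k‖ ≤ 2 * Real.exp (-(|(k : ℝ)| * (2 * (ζ - |μ.im|)))) := by
  have hcoshC : Complex.cosh ((k : ℂ) * (ζ : ℂ)) = ((Real.cosh ((k : ℝ) * ζ) : ℝ) : ℂ) := by
    rw [Complex.ofReal_cosh]
    norm_cast
  have n1 : ‖((Real.exp (-(|(k : ℝ)|) * ζ) : ℝ) : ℂ)‖ = Real.exp (-(|(k : ℝ)|) * ζ) := by
    rw [Complex.norm_real, Real.norm_eq_abs, abs_of_pos (Real.exp_pos _)]
  have n2 : ‖((Real.cosh ((k : ℝ) * ζ) : ℝ) : ℂ)‖ = Real.cosh ((k : ℝ) * ζ) := by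
    rw [Complex.norm_real, Real.norm_eq_abs, abs_of_pos (Real.cosh_pos _)]
  rw [cf, norm_neg, norm_div, norm_mul, hcoshC, n1, n2]
  have him : |(2 * (k : ℂ) * μ).im| = 2 * |(k : ℝ)| * |μ.im| := by
    have : (2 * (k : ℂ) * μ).im = 2 * (k : ℝ) * μ.im := by
      simp [Complex.mul_im]
    rw [this, abs_mul, abs_mul, show |(2:ℝ)| = 2 by norm_num]
  have h1 : ‖Complex.cos (2 * (k : ℂ) * μ)‖ ≤ Real.exp (2 * |(k : ℝ)| * |μ.im|) := by
    calc ‖Complex.cos (2 * (k : ℂ) * μ)‖ ≤ Real.exp |(2 * (k : ℂ) * μ).im| := abs_cos_le _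
      _ = Real.exp (2 * |(k : ℝ)| * |μ.im|) := by rw [him]
  have h2 : Real.exp (|(k : ℝ)| * ζ) / 2 ≤ Real.cosh ((k : ℝ) * ζ) := by
    have := cosh_lower ((k : ℝ) * ζ)
    rwa [abs_mul, abs_of_pos hζ] at this
  calc Real.exp (-(|(k : ℝ)|) * ζ) * ‖Complex.cos (2 * (k : ℂ) * μ)‖ / Real.cosh ((k : ℝ) * ζ)
      ≤ Real.exp (-(|(k : ℝ)|) * ζ) * Real.exp (2 * |(k : ℝ)| * |μ.im|) /
        (Real.exp (|(k : ℝ)| * ζ) / 2) := by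
        exact div_le_div₀ (by positivity)
          (mul_le_mul_of_nonneg_left h1 (Real.exp_pos _).le) (by positivity) h2
    _ = 2 * Real.exp (-(|(k : ℝ)| * (2 * (ζ - |μ.im|)))) := by
        rw [div_div_eq_mul_div, ← Real.exp_add, mul_comm _ (2:ℝ), mul_div_assoc,
          ← Real.exp_sub]
        congr 1
        ring

lemma phiP_norm_le (ζ : ℝ) (hζ : 0 < ζ) (ν : ℂ) (hν : ν.im = 0) :
    ‖phiP ν ζ‖ ≤ ∑' j : ℤ, 2 * Real.exp (-(|(j : ℝ)| * (2 * ζ))) := by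
  have hs := phiP_hasSum ζ hζ ν (by rw [hν]; simpa using hζ)
  rw [← hs.tsum_eq]
  have hnorm : ∀ j : ℤ, ‖2 * ((Real.exp (-(|(j : ℝ)| * (2 * ζ))) : ℂ) *
      Complex.exp (Complex.I * j * (2 * ν)))‖
      = 2 * Real.exp (-(|(j : ℝ)| * (2 * ζ))) := by
    intro j
    rw [norm_mul, norm_mul, show ‖(2:ℂ)‖ = 2 by norm_num, Complex.norm_real,
      Real.norm_eq_abs, abs_of_pos (Real.exp_pos _), Complex.norm_exp]
    have hre : (Complex.I * j * (2 * ν)).re = 0 := by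
      simp [hν]
    rw [hre, Real.exp_zero, mul_one]
  have hsum : Summable (fun j : ℤ => 2 * Real.exp (-(|(j : ℝ)| * (2 * ζ)))) :=
    (summable_exp_int (2*ζ) (by linarith)).mul_left 2
  calc ‖∑' j : ℤ, 2 * ((Real.exp (-(|(j : ℝ)| * (2 * ζ))) : ℂ) *
      Complex.exp (Complex.I * j * (2 * ν)))‖
      ≤ ∑' j : ℤ, ‖2 * ((Real.exp (-(|(j : ℝ)| * (2 * ζ))) : ℂ) *
        Complex.exp (Complex.I * j * (2 * ν)))‖ := by
        apply norm_tsum_le_tsum_norm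
        exact hsum.congr (fun j => (hnorm j).symm)
    _ = ∑' j : ℤ, 2 * Real.exp (-(|(j : ℝ)| * (2 * ζ))) := tsum_congr hnorm

/-- For `ζ > 0` and `|Im μ| < ζ`, `u_μ` solves the dressing integral equation
`u_μ(α) + ∫_{−π/2}^{π/2} K(α−β) u_μ(β) dβ = −(1/2)[φ'(α−μ,ζ) + φ'(α+μ,ζ)]` for real `α`,
where `K(λ) = φ'(λ,ζ)/(2π)`. -/
theorem close_root_dressing_equation
    (ζ : ℝ) (hζ : 0 < ζ) (μ : ℂ) (hμ : |μ.im| < ζ) (α : ℝ) :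
    uFun ζ μ α +
        ∫ β in (-(Real.pi / 2))..(Real.pi / 2),
          phiP ((α : ℂ) - (β : ℂ)) ζ / (2 * (Real.pi : ℂ)) * uFun ζ μ β
      = -(1 / 2) * (phiP ((α : ℂ) - μ) ζ + phiP ((α : ℂ) + μ) ζ) := by
  have hπ : (0:ℝ) < Real.pi := Real.pi_pos
  have h2πC : (2 * (Real.pi : ℂ)) ≠ 0 := by
    exact mul_ne_zero two_ne_zero (Complex.ofReal_ne_zero.2 Real.pi_ne_zero)
  set B : ℤ → ℝ := fun k => 2 * Real.exp (-(|(k : ℝ)| * (2 * (ζ - |μ.im|)))) with hBdef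
  have hBs : Summable B := (summable_exp_int _ (by linarith)).mul_left 2
  have hBnn : ∀ k, 0 ≤ B k := fun k => by simp only [hBdef]; positivity
  set M : ℝ := ∑' j : ℤ, 2 * Real.exp (-(|(j : ℝ)| * (2 * ζ))) with hMdef
  have hMnn : 0 ≤ M := tsum_nonneg (fun j => by positivity)
  have hexp1 : ∀ (k : ℤ) (x : ℝ), ‖Complex.exp (2 * Complex.I * (k:ℂ) * (x:ℂ))‖ = 1 := by
    intro k x
    rw [Complex.norm_exp]
    have : (2 * Complex.I * (k:ℂ) * (x:ℂ)).re = 0 := by simp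
    rw [this, Real.exp_zero]
  have hcfB : ∀ (k : ℤ) (x : ℝ),
      ‖cf ζ μ k * Complex.exp (2 * Complex.I * (k:ℂ) * (x:ℂ))‖ ≤ B k := by
    intro k x
    rw [norm_mul, hexp1, mul_one]
    exact cf_bound ζ hζ μ hμ k
  have hg : Summable (fun k : ℤ => cf ζ μ k * Complex.exp (2 * Complex.I * (k:ℂ) * (α:ℂ))) :=
    Summable.of_norm_bounded hBs (fun k => hcfB k α)
  -- the integral term
  have hFcont : ∀ k : ℤ, Continuous (fun β : ℝ =>
      phiP ((α : ℂ) - (β : ℂ)) ζ / (2 * (Real.pi : ℂ)) *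
        (cf ζ μ k * Complex.exp (2 * Complex.I * (k:ℂ) * (β:ℂ)))) := by
    intro k
    apply Continuous.mul
    · exact (phiP_continuous ζ hζ α).div_const _
    · fun_prop
  have hFnorm : ∀ (k : ℤ) (β : ℝ),
      ‖phiP ((α : ℂ) - (β : ℂ)) ζ / (2 * (Real.pi : ℂ)) *
        (cf ζ μ k * Complex.exp (2 * Complex.I * (k:ℂ) * (β:ℂ)))‖ ≤ M / (2 * Real.pi) * B k := by
    intro k β
    rw [norm_mul, norm_div]
    have hn2π : ‖(2 * (Real.pi : ℂ))‖ = 2 * Real.pi := by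
      rw [norm_mul, show ‖(2:ℂ)‖ = 2 by norm_num, Complex.norm_real, Real.norm_eq_abs,
        abs_of_pos hπ]
    rw [hn2π]
    have h1 : ‖phiP ((α : ℂ) - (β : ℂ)) ζ‖ ≤ M := phiP_norm_le ζ hζ _ (by simp)
    have h2 := hcfB k β
    have hnn : (0:ℝ) < 2 * Real.pi := by linarith
    apply mul_le_mul (by gcongr) h2 (norm_nonneg _) (by positivity)
  have hint : (∫ β in (-(Real.pi / 2))..(Real.pi / 2),
        phiP ((α : ℂ) - (β : ℂ)) ζ / (2 * (Real.pi : ℂ)) * uFun ζ μ β)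
      = ∑' k : ℤ, cf ζ μ k * (Real.exp (-(|(k:ℝ)| * (2*ζ))) : ℂ)
          * Complex.exp (2*Complex.I*(k:ℂ)*(α:ℂ)) := by
    have step1 : (∫ β in (-(Real.pi / 2))..(Real.pi / 2),
          phiP ((α : ℂ) - (β : ℂ)) ζ / (2 * (Real.pi : ℂ)) * uFun ζ μ β)
        = ∫ β in (-(Real.pi / 2))..(Real.pi / 2), ∑' k : ℤ,
            phiP ((α : ℂ) - (β : ℂ)) ζ / (2 * (Real.pi : ℂ)) *
              (cf ζ μ k * Complex.exp (2 * Complex.I * (k:ℂ) * (β:ℂ))) := by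
      apply intervalIntegral.integral_congr
      intro β _
      beta_reduce
      rw [uFun_eq, tsum_mul_left]
    rw [step1, interval_integral_tsum (by linarith) hFcont (fun k => M / (2 * Real.pi) * B k)
      hFnorm (hBs.mul_left _)]
    apply tsum_congr
    intro k
    have hrw : (fun β : ℝ => phiP ((α : ℂ) - (β : ℂ)) ζ / (2 * (Real.pi : ℂ)) *
        (cf ζ μ k * Complex.exp (2 * Complex.I * (k:ℂ) * (β:ℂ))))
        = fun β : ℝ => (cf ζ μ k / (2 * (Real.pi : ℂ))) *
          (phiP ((α : ℂ) - (β : ℂ)) ζ * Complex.exp (2 * Complex.I * (k:ℂ) * (β:ℂ))) := by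
      funext β
      ring
    rw [hrw, intervalIntegral.integral_const_mul, K_coeff ζ hζ α k]
    field_simp
  rw [uFun_eq ζ μ α, hint]
  -- summability of the second series
  have hh : Summable (fun k : ℤ => cf ζ μ k * (Real.exp (-(|(k:ℝ)| * (2*ζ))) : ℂ)
      * Complex.exp (2*Complex.I*(k:ℂ)*(α:ℂ))) := by
    apply Summable.of_norm_bounded hBs
    intro k
    rw [norm_mul, norm_mul, hexp1, mul_one, Complex.norm_real,
      Real.norm_eq_abs, abs_of_pos (Real.exp_pos _)]
    calc ‖cf ζ μ k‖ * Real.exp (-(|(k:ℝ)| * (2*ζ))) ≤ B k * 1 := by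
          apply mul_le_mul (cf_bound ζ hζ μ hμ k)
            (Real.exp_le_one_iff.2 (neg_nonpos.2 (by positivity)))
            (Real.exp_pos _).le (hBnn k)
      _ = B k := mul_one _
  rw [← hg.tsum_add hh]
  -- the right-hand side expansion
  have H1 := phiP_hasSum ζ hζ ((α : ℂ) - μ) (by
    have : ((α : ℂ) - μ).im = -μ.im := by simp
    rw [this, abs_neg]; exact hμ)
  have H2 := phiP_hasSum ζ hζ ((α : ℂ) + μ) (by
    have : ((α : ℂ) + μ).im = μ.im := by simp
    rw [this]; exact hμ)
  have HR := (H1.add H2).mul_left (-(1/2) : ℂ)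
  rw [← HR.tsum_eq]
  apply tsum_congr
  intro k
  -- termwise identity
  set X := Complex.exp (2*Complex.I*(k:ℂ)*(α:ℂ)) with hX
  set e2c : ℂ := (Real.exp (-(|(k:ℝ)| * (2*ζ))) : ℂ) with he2
  have hcoshC : Complex.cosh ((k:ℂ)*(ζ:ℂ)) = ((Real.cosh ((k:ℝ)*ζ) : ℝ) : ℂ) := by
    rw [Complex.ofReal_cosh]
    norm_cast
  have hC : ((Real.cosh ((k:ℝ)*ζ) : ℝ) : ℂ) ≠ 0 := by
    exact_mod_cast (Real.cosh_pos ((k:ℝ)*ζ)).ne'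
  have hE1 : Complex.exp (Complex.I*(k:ℂ)*(2*((α:ℂ) - μ)))
      = X * Complex.exp (-(2*Complex.I*(k:ℂ)*μ)) := by
    rw [hX, ← Complex.exp_add]
    congr 1
    ring
  have hE2 : Complex.exp (Complex.I*(k:ℂ)*(2*((α:ℂ) + μ)))
      = X * Complex.exp (2*Complex.I*(k:ℂ)*μ) := by
    rw [hX, ← Complex.exp_add]
    congr 1
    ring
  have hcos : Complex.exp (-(2*Complex.I*(k:ℂ)*μ)) + Complex.exp (2*Complex.I*(k:ℂ)*μ)
      = 2 * Complex.cos (2*(k:ℂ)*μ) := by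
    have a1 : Complex.exp (2*Complex.I*(k:ℂ)*μ) = Complex.exp ((2*(k:ℂ)*μ)*Complex.I) := by
      congr 1
      ring
    have a2 : Complex.exp (-(2*Complex.I*(k:ℂ)*μ))
        = Complex.exp (-(2*(k:ℂ)*μ)*Complex.I) := by
      congr 1
      ring
    rw [a1, a2, Complex.cos]
    ring
  have hre : Real.exp (-(|(k:ℝ)|) * ζ) * (1 + Real.exp (-(|(k:ℝ)| * (2*ζ))))
      = 2 * Real.exp (-(|(k:ℝ)| * (2*ζ))) * Real.cosh ((k:ℝ)*ζ) := by
    have hcosh2 : Real.cosh ((k:ℝ)*ζ)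
        = (Real.exp (|(k:ℝ)| * ζ) + Real.exp (-(|(k:ℝ)| * ζ)))/2 := by
      rw [← Real.cosh_abs, abs_mul, abs_of_pos hζ, Real.cosh_eq]
    rw [hcosh2]
    have e1 : Real.exp (-(|(k:ℝ)|) * ζ) * Real.exp (-(|(k:ℝ)| * (2*ζ)))
        = Real.exp (-(3*(|(k:ℝ)| * ζ))) := by rw [← Real.exp_add]; congr 1; ring
    have e2' : Real.exp (-(|(k:ℝ)| * (2*ζ))) * Real.exp (|(k:ℝ)| * ζ)
        = Real.exp (-(|(k:ℝ)|) * ζ) := by rw [← Real.exp_add]; congr 1; ring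
    have e3 : Real.exp (-(|(k:ℝ)| * (2*ζ))) * Real.exp (-(|(k:ℝ)| * ζ))
        = Real.exp (-(3*(|(k:ℝ)| * ζ))) := by rw [← Real.exp_add]; congr 1; ring
    linear_combination e1 - e2' - e3
  have hreC : ((Real.exp (-(|(k:ℝ)|) * ζ) : ℝ) : ℂ) * (1 + e2c)
      = 2 * e2c * ((Real.cosh ((k:ℝ)*ζ) : ℝ) : ℂ) := by
    rw [he2]
    exact_mod_cast congrArg (fun t : ℝ => (t : ℂ)) hre
  rw [cf, hE1, hE2]
  have hCne : Complex.cosh ((k:ℂ)*(ζ:ℂ)) ≠ 0 := by rw [hcoshC]; exact hC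
  have hCinv : Complex.cosh ((k:ℂ)*(ζ:ℂ)) * (Complex.cosh ((k:ℂ)*(ζ:ℂ)))⁻¹ = 1 :=
    mul_inv_cancel₀ hCne
  have hreC2 : ((Real.exp (-(|(k:ℝ)|) * ζ) : ℝ) : ℂ) * (1 + e2c)
      = 2 * e2c * Complex.cosh ((k:ℂ)*(ζ:ℂ)) := by rw [hcoshC]; exact hreC
  linear_combination (-(Complex.cos (2*(k:ℂ)*μ) * X * (Complex.cosh ((k:ℂ)*(ζ:ℂ)))⁻¹)) * hreC2
    + (e2c * X) * hcos + (-(2*e2c*Complex.cos (2*(k:ℂ)*μ)*X)) * hCinv
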